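/- Continuation Principle for the Z-domination game: Let G be a finite simple graph without isolated vertices and let B ⊆ A ⊆ V(G). Then γ_Zg(G|A) ≤ γ_Zg(G|B) and γ'_Zg(G|A) ≤ γ'_Zg(G|B). -/
import Mathlib


/- Formalization of the domination games from "The variety of domination games".

A game is specified by a legality predicate `legal : List V → V → Prop`, where the list
records the previously played vertices (most recent first).  Players alternate moves;
each move must be legal; the game ends when no legal move exists.  Dominator wants to
minimize, Staller to maximize, the total number of moves.

`canEnd legal k turn h` states that, with history `h` and the player to move given by
`turn` (`true` = Dominator), Dominator can guarantee that at most `k` further moves are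
played (against any play of Staller).  The value of the game under optimal play by both
players is then the least such `k` from the empty history. -/

/-- The closed neighborhood `N[v]` of a vertex. -/
def closedNbhd {V : Type*} (G : SimpleGraph V) (v : V) : Set V :=
  insert v (G.neighborSet v)

/-- `⋃_{u ∈ h} N[u]` : the set of vertices dominated by the moves in `h`. -/
def dominatedBy {V : Type*} (G : SimpleGraph V) (h : List V) : Set V :=
  ⋃ u ∈ h, closedNbhd G u

/-- `⋃_{u ∈ h} N(u)` : the set of vertices totally dominated by the moves in `h`. -/
def totDominatedBy {V : Type*} (G : SimpleGraph V) (h : List V) : Set V :=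
  ⋃ u ∈ h, G.neighborSet u

/-- Legality in the domination game: `N[v] \ ⋃_{j<i} N[v_j] ≠ ∅`. -/
def dgLegal {V : Type*} (G : SimpleGraph V) (h : List V) (v : V) : Prop :=
  (closedNbhd G v \ dominatedBy G h).Nonempty

/-- Legality in the total domination game: `N(v) \ ⋃_{j<i} N(v_j) ≠ ∅`. -/
def tgLegal {V : Type*} (G : SimpleGraph V) (h : List V) (v : V) : Prop :=
  (G.neighborSet v \ totDominatedBy G h).Nonempty

/-- Legality in the Z-domination game on `G|A`: `N(v) \ (A ∪ ⋃_{j<i} N[v_j]) ≠ ∅`. -/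
def zLegal {V : Type*} (G : SimpleGraph V) (A : Set V) (h : List V) (v : V) : Prop :=
  (G.neighborSet v \ (A ∪ dominatedBy G h)).Nonempty

/-- Legality in the LL-domination game on `G|A`: `N[v] \ (A ∪ ⋃_{j<i} N(v_j)) ≠ ∅`. -/
def llLegal {V : Type*} (G : SimpleGraph V) (A : Set V) (h : List V) (v : V) : Prop :=
  (closedNbhd G v \ (A ∪ totDominatedBy G h)).Nonempty

/-- Legality in the L-domination game on `G|A`: as in the LL-game, and moreover no vertex
may be played twice. -/
def lLegal {V : Type*} (G : SimpleGraph V) (A : Set V) (h : List V) (v : V) : Prop :=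
  llLegal G A h v ∧ v ∉ h

/-- `canEnd legal k turn h` : with previously played vertices `h` and the player to move
given by `turn` (`true` = Dominator, `false` = Staller), Dominator has a strategy
guaranteeing that at most `k` further moves are made. -/
def canEnd {V : Type*} (legal : List V → V → Prop) : ℕ → Bool → List V → Prop
  | 0, _, h => ∀ v, ¬ legal h v
  | k+1, true, h => (∀ v, ¬ legal h v) ∨ ∃ v, legal h v ∧ canEnd legal k false (v :: h)
  | k+1, false, h => ∀ v, legal h v → canEnd legal k true (v :: h)

/-- The number of moves in the game with legality predicate `legal` when both players play
optimally (Dominator minimizing, Staller maximizing the number of moves); `dFirst = true`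
means Dominator makes the first move. -/
noncomputable def gameVal {V : Type*} (legal : List V → V → Prop) (dFirst : Bool) : ℕ :=
  sInf {k | canEnd legal k dFirst []}

/-- The game Z-domination number `γ_Zg(G|A)` (Dominator starts). -/
noncomputable def gammaZgA {V : Type*} (G : SimpleGraph V) (A : Set V) : ℕ :=
  gameVal (zLegal G A) true

/-- The Staller-start game Z-domination number `γ'_Zg(G|A)`. -/
noncomputable def gammaZgA' {V : Type*} (G : SimpleGraph V) (A : Set V) : ℕ :=
  gameVal (zLegal G A) false

/-- The game L-domination number `γ_Lg(G|A)` (Dominator starts). -/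
noncomputable def gammaLgA {V : Type*} (G : SimpleGraph V) (A : Set V) : ℕ :=
  gameVal (lLegal G A) true

/-- The Staller-start game L-domination number `γ'_Lg(G|A)`. -/
noncomputable def gammaLgA' {V : Type*} (G : SimpleGraph V) (A : Set V) : ℕ :=
  gameVal (lLegal G A) false

/-- The game LL-domination number `γ_LLg(G|A)` (Dominator starts). -/
noncomputable def gammaLLgA {V : Type*} (G : SimpleGraph V) (A : Set V) : ℕ :=
  gameVal (llLegal G A) true

/-- The Staller-start game LL-domination number `γ'_LLg(G|A)`. -/
noncomputable def gammaLLgA' {V : Type*} (G : SimpleGraph V) (A : Set V) : ℕ :=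
  gameVal (llLegal G A) false

/-- The game domination number `γ_g(G)` (Dominator starts). -/
noncomputable def gammaG {V : Type*} (G : SimpleGraph V) : ℕ :=
  gameVal (dgLegal G) true

/-- The game total domination number `γ_tg(G)` (Dominator starts). -/
noncomputable def gammaTg {V : Type*} (G : SimpleGraph V) : ℕ :=
  gameVal (tgLegal G) true

/-- The game Z-domination number `γ_Zg(G)` (Dominator starts). -/
noncomputable def gammaZg {V : Type*} (G : SimpleGraph V) : ℕ := gammaZgA G ∅

/-- The Staller-start game Z-domination number `γ'_Zg(G)`. -/
noncomputable def gammaZg' {V : Type*} (G : SimpleGraph V) : ℕ := gammaZgA' G ∅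

/-- The game L-domination number `γ_Lg(G)` (Dominator starts). -/
noncomputable def gammaLg {V : Type*} (G : SimpleGraph V) : ℕ := gammaLgA G ∅

/-- The Staller-start game L-domination number `γ'_Lg(G)`. -/
noncomputable def gammaLg' {V : Type*} (G : SimpleGraph V) : ℕ := gammaLgA' G ∅

/-- The game LL-domination number `γ_LLg(G)` (Dominator starts). -/
noncomputable def gammaLLg {V : Type*} (G : SimpleGraph V) : ℕ := gammaLLgA G ∅

/-- The Staller-start game LL-domination number `γ'_LLg(G)`. -/
noncomputable def gammaLLg' {V : Type*} (G : SimpleGraph V) : ℕ := gammaLLgA' G ∅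

/-- `G` has no isolated vertices. -/
def isolateFree {V : Type*} (G : SimpleGraph V) : Prop := ∀ v : V, ∃ u, G.Adj v u

/-- The domination number `γ(G)`. -/
noncomputable def domNum {V : Type*} (G : SimpleGraph V) : ℕ :=
  sInf {k | ∃ S : Finset V, S.card = k ∧ ∀ v : V, ∃ u ∈ S, v ∈ closedNbhd G u}

/-- The total domination number `γ_t(G)`. -/
noncomputable def totDomNum {V : Type*} (G : SimpleGraph V) : ℕ :=
  sInf {k | ∃ S : Finset V, S.card = k ∧ ∀ v : V, ∃ u ∈ S, G.Adj u v}

section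
variable {V : Type*} (G : SimpleGraph V) (A B : Set V)

lemma dominatedBy_cons (v : V) (h : List V) :
    dominatedBy G (v :: h) = closedNbhd G v ∪ dominatedBy G h := by
  ext x; simp [dominatedBy, or_and_right, Set.mem_iUnion]

lemma legal_transfer {h' h : List V}
    (hinv : B ∪ dominatedBy G h ⊆ A ∪ dominatedBy G h') {w : V}
    (hw : zLegal G A h' w) : zLegal G B h w := by
  obtain ⟨u, hu1, hu2⟩ := hw
  exact ⟨u, hu1, fun hu => hu2 (hinv hu)⟩

lemma inv_cons {h' h : List V}
    (hinv : B ∪ dominatedBy G h ⊆ A ∪ dominatedBy G h') (w : V) :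
    B ∪ dominatedBy G (w :: h) ⊆ A ∪ dominatedBy G (w :: h') := by
  rw [dominatedBy_cons, dominatedBy_cons]
  intro x hx
  rcases hx with hx | hx
  · rcases hinv (Or.inl hx) with h1 | h1
    · exact Or.inl h1
    · exact Or.inr (Or.inr h1)
  · rcases hx with hx | hx
    · exact Or.inr (Or.inl hx)
    · rcases hinv (Or.inr hx) with h1 | h1
      · exact Or.inl h1
      · exact Or.inr (Or.inr h1)

lemma inv_grow {h' h : List V}
    (hinv : B ∪ dominatedBy G h ⊆ A ∪ dominatedBy G h') (w : V) :
    B ∪ dominatedBy G h ⊆ A ∪ dominatedBy G (w :: h') := by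
  rw [dominatedBy_cons]
  intro x hx
  rcases hinv hx with h1 | h1
  · exact Or.inl h1
  · exact Or.inr (Or.inr h1)

lemma main_sim (hG : isolateFree G) (hBA : B ⊆ A) :
    ∀ k : ℕ, ∀ turn : Bool, ∀ h' h : List V,
      B ∪ dominatedBy G h ⊆ A ∪ dominatedBy G h' →
      canEnd (zLegal G B) k turn h → canEnd (zLegal G A) k turn h' := by
  intro k
  induction k using Nat.strong_induction_on with
  | _ k ih =>
    match k with
    | 0 =>
      intro turn h' h hinv hc v hv
      exact hc v (legal_transfer G A B hinv hv)
    | (n+1) =>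
      intro turn h' h hinv hc
      cases turn with
      | false =>
        intro w hw
        exact ih n (Nat.lt_succ_self n) true (w :: h') (w :: h) (inv_cons G A B hinv w)
          (hc w (legal_transfer G A B hinv hw))
      | true =>
        rcases hc with hnone | ⟨v, hv, hcan⟩
        · exact Or.inl fun w hw => hnone w (legal_transfer G A B hinv hw)
        · by_cases hvA : zLegal G A h' v
          · exact Or.inr ⟨v, hvA, ih n (Nat.lt_succ_self n) false (v :: h') (v :: h)
              (inv_cons G A B hinv v) hcan⟩
          · -- v is not legal in the real game: N(v) ⊆ A ∪ D'
            have hNv : G.neighborSet v ⊆ A ∪ dominatedBy G h' := by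
              intro x hx
              by_contra hxn
              exact hvA ⟨x, hx, hxn⟩
            by_cases hvmem : v ∈ A ∪ dominatedBy G h'
            · -- N[v] ⊆ A ∪ D'; skip the imagined move v
              have hinv2 : B ∪ dominatedBy G (v :: h) ⊆ A ∪ dominatedBy G h' := by
                rw [dominatedBy_cons]
                intro x hx
                rcases hx with hx | hx
                · exact hinv (Or.inl hx)
                · rcases hx with hx | hx
                  · rcases hx with hx | hx
                    · exact hx ▸ hvmem
                    · exact hNv hx
                  · exact hinv (Or.inr hx)
              -- now "shift": imagined canEnd n false (v::h) gives real canEnd (n+1) true h'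
              match n, hcan with
              | 0, hcan =>
                exact Or.inl fun w hw => hcan w (legal_transfer G A B hinv2 hw)
              | (m+1), hcan =>
                by_cases hex : ∃ w, zLegal G A h' w
                · obtain ⟨w, hw⟩ := hex
                  have hwB : zLegal G B (v :: h) w := legal_transfer G A B hinv2 hw
                  have hc2 : canEnd (zLegal G B) m true (w :: v :: h) := hcan w hwB
                  refine Or.inr ⟨w, hw, ?_⟩
                  -- goal: canEnd (zLegal G A) (m+1) false (w :: h')
                  intro s hs
                  -- real Staller plays s; imagined game untouched
                  exact ih m (by omega) true (s :: w :: h') (w :: v :: h)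
                    (inv_grow G A B (inv_cons G A B hinv2 w) s) hc2
                · exact Or.inl fun w hw => hex ⟨w, hw⟩
            · -- v not yet dominated in the real game: play a neighbor of v
              obtain ⟨u, hu⟩ := hG v
              have hureal : zLegal G A h' u := ⟨v, hu.symm, hvmem⟩
              have hinv3 : B ∪ dominatedBy G (v :: h) ⊆ A ∪ dominatedBy G (u :: h') := by
                rw [dominatedBy_cons, dominatedBy_cons]
                intro x hx
                rcases hx with hx | hx
                · rcases hinv (Or.inl hx) with h1 | h1
                  · exact Or.inl h1
                  · exact Or.inr (Or.inr h1)
                · rcases hx with hx | hx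
                  · rcases hx with hx | hx
                    · subst hx
                      exact Or.inr (Or.inl (Set.mem_insert_iff.mpr (Or.inr hu.symm)))
                    · rcases hNv hx with h1 | h1
                      · exact Or.inl h1
                      · exact Or.inr (Or.inr h1)
                  · rcases hinv (Or.inr hx) with h1 | h1
                    · exact Or.inl h1
                    · exact Or.inr (Or.inr h1)
              exact Or.inr ⟨u, hureal, ih n (Nat.lt_succ_self n) false (u :: h') (v :: h)
                hinv3 hcan⟩

lemma canEnd_of_card [Fintype V] :
    ∀ k : ℕ, ∀ turn : Bool, ∀ h : List V,
      ((A ∪ dominatedBy G h)ᶜ).ncard ≤ k → canEnd (zLegal G A) k turn h := by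
  intro k
  induction k with
  | zero =>
    intro turn h hcard v hv
    obtain ⟨u, hu1, hu2⟩ := hv
    have : ((A ∪ dominatedBy G h)ᶜ).ncard ≠ 0 := by
      have : u ∈ (A ∪ dominatedBy G h)ᶜ := hu2
      exact Set.ncard_ne_zero_of_mem this (Set.toFinite _)
    omega
  | succ k ihk =>
    intro turn h hcard
    have step : ∀ v, zLegal G A h v → ((A ∪ dominatedBy G (v :: h))ᶜ).ncard ≤ k := by
      intro v hv
      obtain ⟨u, hu1, hu2⟩ := hv
      have hss : (A ∪ dominatedBy G (v :: h))ᶜ ⊂ (A ∪ dominatedBy G h)ᶜ := by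
        constructor
        · intro x hx hxmem
          apply hx
          rcases hxmem with hx1 | hx1
          · exact Or.inl hx1
          · rw [dominatedBy_cons]; exact Or.inr (Or.inr hx1)
        · intro hsub
          have : u ∈ (A ∪ dominatedBy G (v :: h))ᶜ := hsub hu2
          apply this
          rw [dominatedBy_cons]
          exact Or.inr (Or.inl (Set.mem_insert_iff.mpr (Or.inr hu1)))
      have := Set.ncard_lt_ncard hss (Set.toFinite _)
      omega
    cases turn with
    | true =>
      by_cases hex : ∃ v, zLegal G A h v
      · obtain ⟨v, hv⟩ := hex
        exact Or.inr ⟨v, hv, ihk false (v :: h) (step v hv)⟩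
      · exact Or.inl fun v hv => hex ⟨v, hv⟩
    | false =>
      intro v hv
      exact ihk true (v :: h) (step v hv)

end

/-- Continuation Principle for the Z-domination game on predominated graphs. -/
theorem continuation_principle_Z {V : Type*} [Fintype V] (G : SimpleGraph V)
    (hG : isolateFree G) (A B : Set V) (hBA : B ⊆ A) :
    gammaZgA G A ≤ gammaZgA G B ∧ gammaZgA' G A ≤ gammaZgA' G B := by
  have hinv : B ∪ dominatedBy G [] ⊆ A ∪ dominatedBy G [] := by
    intro x hx
    rcases hx with hx | hx
    · exact Or.inl (hBA hx)
    · exact Or.inr hx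
  constructor
  · have hne : {k | canEnd (zLegal G B) k true []}.Nonempty :=
      ⟨((B ∪ dominatedBy G [])ᶜ).ncard, canEnd_of_card G B _ true [] le_rfl⟩
    have hmem := Nat.sInf_mem hne
    exact Nat.sInf_le (main_sim G A B hG hBA _ true [] [] hinv hmem)
  · have hne : {k | canEnd (zLegal G B) k false []}.Nonempty :=
      ⟨((B ∪ dominatedBy G [])ᶜ).ncard, canEnd_of_card G B _ false [] le_rfl⟩
    have hmem := Nat.sInf_mem hne
    exact Nat.sInf_le (main_sim G A B hG hBA _ false [] [] hinv hmem)
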